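/- Let 0 < δ ≤ M and R > 0. For i = 1,2 let uᵢ : [0,1] → ℝ be continuously differentiable with uᵢ(0) = 0 and δ ≤ uᵢ'(x) ≤ M on [0,1], set sᵢ = uᵢ(1), and let wᵢ : [0,1] → [0,1] satisfy uᵢ(wᵢ(x)) = sᵢ x for all x ∈ [0,1]. Let v₁, v₂ : [0,1] → ℝ be continuously differentiable with sup_{[0,1]} |v₁'| ≤ R, and define v̄ᵢ(x) = vᵢ(wᵢ(x)). Then there exists a constant C₂ > 0 depending only on δ, M, R such that (∫₀¹ (v̄₁(x) − v̄₂(x))² dx)^{1/2} ≤ C₂ ( (∫₀¹ (u₁'(x) − u₂'(x))² dx)^{1/2} + (∫₀¹ (v₁(x) − v₂(x))² dx)^{1/2} ). -/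

import Mathlib

open Set MeasureTheory


/-- Cauchy–Schwarz on [0,1] for continuous f: ∫|f| ≤ √(∫ f²). -/
lemma cs_aux (f : ℝ → ℝ) (hf : Continuous f) :
    (∫ x in (0:ℝ)..1, |f x|) ≤ Real.sqrt (∫ x in (0:ℝ)..1, (f x)^2) := by
  set t := ∫ x in (0:ℝ)..1, |f x| with ht
  have ht0 : 0 ≤ t := intervalIntegral.integral_nonneg (by norm_num)
    (fun x _ => abs_nonneg _)
  have hI1 : IntervalIntegrable (fun x => (f x)^2) volume 0 1 :=
    ((hf.pow 2).intervalIntegrable 0 1)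
  have hI2 : IntervalIntegrable (fun x => |f x|) volume 0 1 := hf.abs.intervalIntegrable 0 1
  have h0 : 0 ≤ ∫ x in (0:ℝ)..1, (|f x| - t)^2 :=
    intervalIntegral.integral_nonneg (by norm_num) (fun x _ => sq_nonneg _)
  have hexp : (∫ x in (0:ℝ)..1, (|f x| - t)^2)
      = (∫ x in (0:ℝ)..1, (f x)^2) - t^2 := by
    have h1 : ∀ x, (|f x| - t)^2 = (f x)^2 - (2*t)*|f x| + t^2 := by
      intro x; rw [sub_sq, sq_abs]; ring
    simp_rw [h1]
    rw [intervalIntegral.integral_add ((hI1.sub (hI2.const_mul (2*t)))) intervalIntegrable_const,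
        intervalIntegral.integral_sub hI1 (hI2.const_mul (2*t)),
        intervalIntegral.integral_const_mul, ← ht, intervalIntegral.integral_const]
    simp; ring
  have hsq : t^2 ≤ ∫ x in (0:ℝ)..1, (f x)^2 := by linarith
  calc t = Real.sqrt (t^2) := (Real.sqrt_sq ht0).symm
    _ ≤ Real.sqrt (∫ x in (0:ℝ)..1, (f x)^2) := Real.sqrt_le_sqrt hsq

lemma sqrt_add_le_aux {x y : ℝ} (hx : 0 ≤ x) (hy : 0 ≤ y) :
    Real.sqrt (x + y) ≤ Real.sqrt x + Real.sqrt y := by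
  have h : x + y ≤ (Real.sqrt x + Real.sqrt y)^2 := by
    nlinarith [Real.sq_sqrt hx, Real.sq_sqrt hy,
      mul_nonneg (Real.sqrt_nonneg x) (Real.sqrt_nonneg y)]
  calc Real.sqrt (x+y) ≤ Real.sqrt ((Real.sqrt x + Real.sqrt y)^2) := Real.sqrt_le_sqrt h
    _ = Real.sqrt x + Real.sqrt y := Real.sqrt_sq (by positivity)


/-- Derived facts for a single pair (u, w). -/
lemma uw_facts (δ M : ℝ) (hδ : 0 < δ) (u w : ℝ → ℝ)
    (hu : ContDiff ℝ 1 u) (hu0 : u 0 = 0)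
    (hud : ∀ x ∈ Icc (0:ℝ) 1, deriv u x ∈ Icc δ M)
    (hw : ∀ x ∈ Icc (0:ℝ) 1, w x ∈ Icc (0:ℝ) 1)
    (hwu : ∀ x ∈ Icc (0:ℝ) 1, u (w x) = u 1 * x) :
    δ ≤ u 1 ∧ ContinuousOn w (Icc 0 1) ∧
      (∀ y ∈ Icc (0:ℝ) 1, u y / u 1 ∈ Icc (0:ℝ) 1) ∧
      (∀ y ∈ Icc (0:ℝ) 1, w (u y / u 1) = y) ∧
      (∀ y ∈ Icc (0:ℝ) 1, ∀ y' ∈ Icc (0:ℝ) 1, δ * |y - y'| ≤ |u y - u y'|) := by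
  have hdiff : ∀ x : ℝ, DifferentiableAt ℝ u x := fun x => (hu.differentiable one_ne_zero) x
  have hcd : Continuous (deriv u) := hu.continuous_deriv le_rfl
  have FTC : ∀ a b : ℝ, (∫ x in a..b, deriv u x) = u b - u a := fun a b =>
    intervalIntegral.integral_deriv_eq_sub (fun x _ => hdiff x) (hcd.intervalIntegrable a b)
  have E' : ∀ y' ∈ Icc (0:ℝ) 1, ∀ y ∈ Icc (0:ℝ) 1, y' ≤ y → δ * (y - y') ≤ u y - u y' := by
    intro y' hy' y hy hle
    rw [← FTC y' y]
    calc δ * (y - y') = ∫ _x in y'..y, δ := by rw [intervalIntegral.integral_const]; simp [mul_comm]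
      _ ≤ ∫ x in y'..y, deriv u x := by
          apply intervalIntegral.integral_mono_on hle intervalIntegrable_const
            (hcd.intervalIntegrable y' y)
          intro x hx
          exact (hud x ⟨hy'.1.trans hx.1, hx.2.trans hy.2⟩).1
  have E : ∀ y ∈ Icc (0:ℝ) 1, ∀ y' ∈ Icc (0:ℝ) 1, δ * |y - y'| ≤ |u y - u y'| := by
    intro y hy y' hy'
    rcases le_total y' y with h | h
    · rw [abs_of_nonneg (by linarith), abs_of_nonneg (by nlinarith [E' y' hy' y hy h])]
      exact E' y' hy' y hy h
    · rw [abs_of_nonpos (by linarith), abs_of_nonpos (by nlinarith [E' y hy y' hy' h])]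
      have := E' y hy y' hy' h; linarith
  have hs : δ ≤ u 1 := by
    have := E' 0 (by norm_num) 1 (by norm_num) (by norm_num); rw [hu0] at this; linarith
  have hs0 : (0:ℝ) < u 1 := lt_of_lt_of_le hδ hs
  have inj : ∀ y ∈ Icc (0:ℝ) 1, ∀ y' ∈ Icc (0:ℝ) 1, u y = u y' → y = y' := by
    intro y hy y' hy' h
    have := E y hy y' hy'
    rw [h, sub_self, abs_zero] at this
    have : |y - y'| ≤ 0 := by nlinarith [abs_nonneg (y - y')]
    have := abs_nonneg (y - y')
    have h0 : |y - y'| = 0 := le_antisymm ‹_› ‹_›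
    rw [abs_eq_zero] at h0; linarith
  have mem : ∀ y ∈ Icc (0:ℝ) 1, u y / u 1 ∈ Icc (0:ℝ) 1 := by
    intro y hy
    have h1 : 0 ≤ u y := by
      have := E' 0 (by norm_num) y hy hy.1; rw [hu0] at this; nlinarith [hy.1]
    have h2 : u y ≤ u 1 := by
      have := E' y hy 1 (by norm_num) hy.2; nlinarith [hy.2]
    exact ⟨div_nonneg h1 hs0.le, (div_le_one hs0).2 h2⟩
  have winv : ∀ y ∈ Icc (0:ℝ) 1, w (u y / u 1) = y := by
    intro y hy
    have hx := mem y hy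
    have h := hwu _ hx
    rw [mul_div_cancel₀ _ hs0.ne'] at h
    exact inj _ (hw _ hx) y hy h
  have hwc : ContinuousOn w (Icc 0 1) := by
    have : LipschitzOnWith (Real.toNNReal (u 1 / δ)) w (Icc 0 1) := by
      rw [lipschitzOnWith_iff_dist_le_mul]
      intro x hx x' hx'
      rw [Real.dist_eq, Real.dist_eq, Real.coe_toNNReal _ (by positivity)]
      have h1 := E _ (hw _ hx) _ (hw _ hx')
      rw [hwu _ hx, hwu _ hx'] at h1
      have h2 : |u 1 * x - u 1 * x'| = u 1 * |x - x'| := by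
        rw [← mul_sub, abs_mul, abs_of_pos hs0]
      rw [h2] at h1
      rw [div_mul_eq_mul_div, le_div_iff₀ hδ, mul_comm]
      linarith
    exact this.continuousOn
  exact ⟨hs, hwc, mem, winv, E⟩

set_option maxHeartbeats 1000000 in
/-- Time-frozen classical form of Lemma 4.2: the pulled-back velocities
v̄ᵢ(x) = vᵢ(uᵢ⁻¹(sᵢ x)) differ in L²(0,1) by at most a constant (depending only
on δ, M, R) times the L² distance of the strains plus that of the velocities. -/
theorem pulled_back_velocity_estimate (δ M R : ℝ) (hδ : 0 < δ) (hδM : δ ≤ M) (hR : 0 < R) :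
    ∃ C₂ > 0, ∀ (u₁ u₂ v₁ v₂ w₁ w₂ : ℝ → ℝ),
      ContDiff ℝ 1 u₁ → ContDiff ℝ 1 u₂ →
      u₁ 0 = 0 → u₂ 0 = 0 →
      (∀ x ∈ Icc (0:ℝ) 1, deriv u₁ x ∈ Icc δ M) →
      (∀ x ∈ Icc (0:ℝ) 1, deriv u₂ x ∈ Icc δ M) →
      (∀ x ∈ Icc (0:ℝ) 1, w₁ x ∈ Icc (0:ℝ) 1) →
      (∀ x ∈ Icc (0:ℝ) 1, w₂ x ∈ Icc (0:ℝ) 1) →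
      (∀ x ∈ Icc (0:ℝ) 1, u₁ (w₁ x) = u₁ 1 * x) →
      (∀ x ∈ Icc (0:ℝ) 1, u₂ (w₂ x) = u₂ 1 * x) →
      ContDiff ℝ 1 v₁ → ContDiff ℝ 1 v₂ →
      (∀ x ∈ Icc (0:ℝ) 1, |deriv v₁ x| ≤ R) →
      (∫ x in (0:ℝ)..1, (v₁ (w₁ x) - v₂ (w₂ x))^2) ^ ((1:ℝ)/2) ≤
        C₂ * ((∫ x in (0:ℝ)..1, (deriv u₁ x - deriv u₂ x)^2) ^ ((1:ℝ)/2) +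
          (∫ x in (0:ℝ)..1, (v₁ x - v₂ x)^2) ^ ((1:ℝ)/2)) := by
  have hM : 0 < M := lt_of_lt_of_le hδ hδM
  refine ⟨Real.sqrt (8*R^2/δ^2) + Real.sqrt (2*M/δ), ?_, ?_⟩
  · exact add_pos_of_nonneg_of_pos (Real.sqrt_nonneg _)
      (Real.sqrt_pos.mpr (div_pos (by linarith) hδ))
  intro u₁ u₂ v₁ v₂ w₁ w₂ hu₁ hu₂ hu₁0 hu₂0 hud₁ hud₂ hw₁ hw₂ hwu₁ hwu₂ hv₁ hv₂ hv₁R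
  obtain ⟨hs₁, hwc₁, hmem₁, hwinv₁, hE₁⟩ := uw_facts δ M hδ u₁ w₁ hu₁ hu₁0 hud₁ hw₁ hwu₁
  obtain ⟨hs₂, hwc₂, hmem₂, hwinv₂, hE₂⟩ := uw_facts δ M hδ u₂ w₂ hu₂ hu₂0 hud₂ hw₂ hwu₂
  have h01 : (0:ℝ) ≤ 1 := zero_le_one
  have huIcc : uIcc (0:ℝ) 1 = Icc 0 1 := uIcc_of_le h01
  have hcd₁ : Continuous (deriv u₁) := hu₁.continuous_deriv le_rfl
  have hcd₂ : Continuous (deriv u₂) := hu₂.continuous_deriv le_rfl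
  have hs₂0 : (0:ℝ) < u₂ 1 := lt_of_lt_of_le hδ hs₂
  rw [← Real.sqrt_eq_rpow, ← Real.sqrt_eq_rpow, ← Real.sqrt_eq_rpow]
  set S := ∫ x in (0:ℝ)..1, |deriv u₁ x - deriv u₂ x| with hSdef
  set A := Real.sqrt (∫ x in (0:ℝ)..1, (deriv u₁ x - deriv u₂ x)^2) with hAdef
  set B := Real.sqrt (∫ x in (0:ℝ)..1, (v₁ x - v₂ x)^2) with hBdef
  have hA0 : 0 ≤ A := Real.sqrt_nonneg _
  have hB0 : 0 ≤ B := Real.sqrt_nonneg _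
  have hS0 : 0 ≤ S := intervalIntegral.integral_nonneg h01 (fun x _ => abs_nonneg _)
  have hSA : S ≤ A := cs_aux _ (hcd₁.sub hcd₂)
  -- sup bound
  have FTC₁ : ∀ a b : ℝ, (∫ x in a..b, deriv u₁ x) = u₁ b - u₁ a := fun a b =>
    intervalIntegral.integral_deriv_eq_sub (fun x _ => hu₁.differentiable one_ne_zero x)
      (hcd₁.intervalIntegrable a b)
  have FTC₂ : ∀ a b : ℝ, (∫ x in a..b, deriv u₂ x) = u₂ b - u₂ a := fun a b =>
    intervalIntegral.integral_deriv_eq_sub (fun x _ => hu₂.differentiable one_ne_zero x)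
      (hcd₂.intervalIntegrable a b)
  have hD : ∀ y ∈ Icc (0:ℝ) 1, |u₁ y - u₂ y| ≤ S := by
    intro y hy
    have h1 : u₁ y - u₂ y = ∫ x in (0:ℝ)..y, (deriv u₁ x - deriv u₂ x) := by
      rw [intervalIntegral.integral_sub (hcd₁.intervalIntegrable 0 y)
        (hcd₂.intervalIntegrable 0 y), FTC₁, FTC₂, hu₁0, hu₂0]; ring
    rw [h1]
    calc |∫ x in (0:ℝ)..y, (deriv u₁ x - deriv u₂ x)|
        ≤ ∫ x in (0:ℝ)..y, |deriv u₁ x - deriv u₂ x| :=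
          intervalIntegral.abs_integral_le_integral_abs hy.1
      _ ≤ S := intervalIntegral.integral_mono_interval le_rfl hy.1 hy.2
          (Filter.Eventually.of_forall fun x => abs_nonneg _)
          ((hcd₁.sub hcd₂).abs.intervalIntegrable 0 1)
  have hwdiff : ∀ x ∈ Icc (0:ℝ) 1, |w₁ x - w₂ x| ≤ 2*S/δ := by
    intro x hx
    have h1 := hE₁ _ (hw₁ x hx) _ (hw₂ x hx)
    rw [hwu₁ x hx] at h1
    have ha : |u₁ 1 * x - u₂ 1 * x| ≤ S := by
      have he : |u₁ 1 * x - u₂ 1 * x| = |u₁ 1 - u₂ 1| * |x| := by rw [← sub_mul, abs_mul]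
      have hx1 : |x| ≤ 1 := by rw [abs_of_nonneg hx.1]; exact hx.2
      have hd1 := hD 1 (by norm_num)
      rw [he]
      nlinarith [abs_nonneg (u₁ 1 - u₂ 1), abs_nonneg x]
    have hb : |u₂ 1 * x - u₁ (w₂ x)| ≤ S := by
      rw [← hwu₂ x hx, abs_sub_comm]
      exact hD _ (hw₂ x hx)
    have h2 : |u₁ 1 * x - u₁ (w₂ x)| ≤ 2*S := by
      calc |u₁ 1 * x - u₁ (w₂ x)|
          ≤ |u₁ 1 * x - u₂ 1 * x| + |u₂ 1 * x - u₁ (w₂ x)| := abs_sub_le _ _ _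
        _ ≤ 2*S := by linarith
    rw [le_div_iff₀ hδ, mul_comm]
    linarith
  -- Lipschitz bound for v₁
  have hvlip : ∀ a ∈ Icc (0:ℝ) 1, ∀ b ∈ Icc (0:ℝ) 1, |v₁ a - v₁ b| ≤ R * |a - b| := by
    intro a ha b hb
    have hfa : v₁ a - v₁ b = ∫ x in b..a, deriv v₁ x :=
      (intervalIntegral.integral_deriv_eq_sub (fun x _ => hv₁.differentiable one_ne_zero x)
        ((hv₁.continuous_deriv le_rfl).intervalIntegrable b a)).symm
    have h := intervalIntegral.norm_integral_le_of_norm_le_const (C := R)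
      (f := fun x => deriv v₁ x) (a := b) (b := a) ?_
    · rw [Real.norm_eq_abs] at h
      rw [hfa]
      exact h
    · intro x hx
      rw [Real.norm_eq_abs]
      apply hv₁R
      have hsub : uIoc b a ⊆ Icc (0:ℝ) 1 :=
        (uIoc_subset_uIcc).trans (uIcc_subset_Icc hb ha)
      exact hsub hx
  -- pointwise bound
  have hpt : ∀ x ∈ Icc (0:ℝ) 1, (v₁ (w₁ x) - v₂ (w₂ x))^2 ≤
      2*(R*(2*S/δ))^2 + 2*(v₁ (w₂ x) - v₂ (w₂ x))^2 := by
    intro x hx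
    have h1 : |v₁ (w₁ x) - v₁ (w₂ x)| ≤ R*(2*S/δ) :=
      le_trans (hvlip _ (hw₁ x hx) _ (hw₂ x hx))
        (mul_le_mul_of_nonneg_left (hwdiff x hx) hR.le)
    have h2 : (v₁ (w₁ x) - v₁ (w₂ x))^2 ≤ (R*(2*S/δ))^2 := by
      nlinarith [abs_nonneg (v₁ (w₁ x) - v₁ (w₂ x)), sq_abs (v₁ (w₁ x) - v₁ (w₂ x))]
    nlinarith [sq_nonneg ((v₁ (w₁ x) - v₁ (w₂ x)) - (v₁ (w₂ x) - v₂ (w₂ x)))]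
  -- integrability
  have hFcont : ContinuousOn (fun x => (v₁ (w₁ x) - v₂ (w₂ x))^2) (Icc (0:ℝ) 1) :=
    ((hv₁.continuous.comp_continuousOn hwc₁).sub (hv₂.continuous.comp_continuousOn hwc₂)).pow 2
  have hGcont : ContinuousOn (fun x => (v₁ (w₂ x) - v₂ (w₂ x))^2) (Icc (0:ℝ) 1) :=
    ((hv₁.continuous.comp_continuousOn hwc₂).sub (hv₂.continuous.comp_continuousOn hwc₂)).pow 2
  have hFint : IntervalIntegrable (fun x => (v₁ (w₁ x) - v₂ (w₂ x))^2) volume 0 1 := by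
    apply ContinuousOn.intervalIntegrable; rw [huIcc]; exact hFcont
  have hGint : IntervalIntegrable (fun x => (v₁ (w₂ x) - v₂ (w₂ x))^2) volume 0 1 := by
    apply ContinuousOn.intervalIntegrable; rw [huIcc]; exact hGcont
  -- step 1
  have hstep1 : (∫ x in (0:ℝ)..1, (v₁ (w₁ x) - v₂ (w₂ x))^2)
      ≤ 2*(R*(2*S/δ))^2 + 2*(∫ x in (0:ℝ)..1, (v₁ (w₂ x) - v₂ (w₂ x))^2) := by
    calc (∫ x in (0:ℝ)..1, (v₁ (w₁ x) - v₂ (w₂ x))^2)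
        ≤ ∫ x in (0:ℝ)..1, (2*(R*(2*S/δ))^2 + 2*(v₁ (w₂ x) - v₂ (w₂ x))^2) :=
          intervalIntegral.integral_mono_on h01 hFint
            (intervalIntegrable_const.add (hGint.const_mul 2)) hpt
      _ = 2*(R*(2*S/δ))^2 + 2*(∫ x in (0:ℝ)..1, (v₁ (w₂ x) - v₂ (w₂ x))^2) := by
          rw [intervalIntegral.integral_add intervalIntegrable_const (hGint.const_mul 2),
            intervalIntegral.integral_const_mul, intervalIntegral.integral_const]
          simp
  -- change of variables
  have hT2 : (∫ x in (0:ℝ)..1, (v₁ (w₂ x) - v₂ (w₂ x))^2)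
      ≤ (M/δ) * ∫ x in (0:ℝ)..1, (v₁ x - v₂ x)^2 := by
    have hder : ∀ y ∈ uIcc (0:ℝ) 1, HasDerivAt (fun y => u₂ y / u₂ 1) (deriv u₂ y / u₂ 1) y :=
      fun y _ => ((hu₂.differentiable one_ne_zero y).hasDerivAt).div_const _
    have hf' : ContinuousOn (fun y => deriv u₂ y / u₂ 1) (uIcc (0:ℝ) 1) :=
      (hcd₂.div_const _).continuousOn
    have himg : (fun y => u₂ y / u₂ 1) '' (uIcc (0:ℝ) 1) ⊆ Icc 0 1 := by
      rw [huIcc]; rintro _ ⟨y, hy, rfl⟩; exact hmem₂ y hy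
    have hgc : ContinuousOn (fun x => (v₁ (w₂ x) - v₂ (w₂ x))^2)
        ((fun y => u₂ y / u₂ 1) '' (uIcc (0:ℝ) 1)) := hGcont.mono himg
    have h := intervalIntegral.integral_comp_smul_deriv' hder hf' hgc
    rw [show u₂ 0 / u₂ 1 = 0 by rw [hu₂0]; simp,
        show u₂ 1 / u₂ 1 = 1 from div_self hs₂0.ne'] at h
    rw [← h]
    rw [intervalIntegral.integral_congr
      (g := fun y => (deriv u₂ y / u₂ 1) * (v₁ y - v₂ y)^2) ?_]
    · rw [← intervalIntegral.integral_const_mul]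
      apply intervalIntegral.integral_mono_on h01
      · apply ContinuousOn.intervalIntegrable
        exact (hcd₂.div_const _).continuousOn.mul
          (((hv₁.continuous.sub hv₂.continuous).pow 2).continuousOn)
      · exact (continuous_const.mul ((hv₁.continuous.sub hv₂.continuous).pow 2)).intervalIntegrable 0 1
      · intro y hy
        apply mul_le_mul_of_nonneg_right _ (sq_nonneg _)
        exact div_le_div₀ hM.le (hud₂ y hy).2 hδ hs₂
    · rw [huIcc]
      intro y hy
      simp only [Function.comp, smul_eq_mul, hwinv₂ y hy]
  -- assemble
  have hA2 : A^2 = ∫ x in (0:ℝ)..1, (deriv u₁ x - deriv u₂ x)^2 :=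
    Real.sq_sqrt (intervalIntegral.integral_nonneg h01 fun x _ => sq_nonneg _)
  have hB2 : B^2 = ∫ x in (0:ℝ)..1, (v₁ x - v₂ x)^2 :=
    Real.sq_sqrt (intervalIntegral.integral_nonneg h01 fun x _ => sq_nonneg _)
  have hI : (∫ x in (0:ℝ)..1, (v₁ (w₁ x) - v₂ (w₂ x))^2)
      ≤ (8*R^2/δ^2)*A^2 + (2*M/δ)*B^2 := by
    have h1 : 2*(R*(2*S/δ))^2 = (8*R^2/δ^2)*S^2 := by field_simp; ring
    have h2 : (8*R^2/δ^2)*S^2 ≤ (8*R^2/δ^2)*A^2 :=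
      mul_le_mul_of_nonneg_left (by nlinarith [pow_le_pow_left₀ hS0 hSA 2]) (by positivity)
    have h3 : 2*((M/δ) * ∫ x in (0:ℝ)..1, (v₁ x - v₂ x)^2) = (2*M/δ)*B^2 := by
      rw [hB2]; ring
    linarith
  calc Real.sqrt (∫ x in (0:ℝ)..1, (v₁ (w₁ x) - v₂ (w₂ x))^2)
      ≤ Real.sqrt ((8*R^2/δ^2)*A^2 + (2*M/δ)*B^2) := Real.sqrt_le_sqrt hI
    _ ≤ Real.sqrt ((8*R^2/δ^2)*A^2) + Real.sqrt ((2*M/δ)*B^2) :=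
        sqrt_add_le_aux (by positivity) (by positivity)
    _ = Real.sqrt (8*R^2/δ^2)*A + Real.sqrt (2*M/δ)*B := by
        rw [Real.sqrt_mul (by positivity) (A^2), Real.sqrt_mul (by positivity) (B^2),
          Real.sqrt_sq hA0, Real.sqrt_sq hB0]
    _ ≤ (Real.sqrt (8*R^2/δ^2) + Real.sqrt (2*M/δ)) * (A + B) := by
        nlinarith [Real.sqrt_nonneg (8*R^2/δ^2), Real.sqrt_nonneg (2*M/δ), hA0, hB0]
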